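/- Let m, k ≥ 2 be integers. Any collection of k^m axis-parallel cubes in ℝ^m with side lengths s_0 ≥ s_1 ≥ ⋯ ≥ s_{k^m - 1} ≥ 0 can be packed (translated to have pairwise disjoint interiors) inside an axis-parallel cube of side length s = s_0 + s_{1^m} + s_{2^m} + ⋯ + s_{(k-1)^m}, i.e. s = Σ_{j=0}^{k-1} s_{j^m}. -/

import Mathlib

/-- The axis-parallel cube in `ℝ^m` with lower corner `x` and side length `s`. -/
def cube {m : ℕ} (x : Fin m → ℝ) (s : ℝ) : Set (Fin m → ℝ) :=
  {y | ∀ d, x d ≤ y d ∧ y d ≤ x d + s}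

open Finset

lemma card_filter_lt_pow (m k M : ℕ) (hM : M ≤ k) :
    (Finset.univ.filter fun a : Fin m → Fin k => ∀ d, (a d : ℕ) < M).card = M ^ m := by
  have h : (Finset.univ.filter fun a : Fin m → Fin k => ∀ d, (a d : ℕ) < M).card
      = (Finset.univ : Finset (Fin m → Fin M)).card := by
    refine Finset.card_bij' (fun a ha => fun d => (⟨(a d : ℕ), ?_⟩ : Fin M))
      (fun b _ => fun d => (⟨(b d : ℕ), lt_of_lt_of_le (b d).2 hM⟩ : Fin k)) ?_ ?_ ?_ ?_
    · exact (Finset.mem_filter.1 ha).2 d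
    · intro a ha; exact Finset.mem_univ _
    · intro b hb
      refine Finset.mem_filter.2 ⟨Finset.mem_univ _, fun d => (b d).2⟩
    · intro a ha; funext d; rfl
    · intro b hb; funext d; rfl
  rw [h, Finset.card_univ]
  simp

lemma exists_assignment (m k : ℕ) (hm : 1 ≤ m) (hk : 1 ≤ k) :
    ∃ c : ℕ → Fin m → ℕ,
      (∀ i, i < k ^ m → ∀ d, c i d < k ∧ c i d ^ m ≤ i) ∧
      (∀ i j, i < k ^ m → j < k ^ m → c i = c j → i = j) := by
  classical
  set A : ℕ → Finset ℕ := fun M => Finset.Ico (M ^ m) ((M + 1) ^ m) with hA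
  set B : ℕ → Finset (Fin m → Fin k) := fun M =>
    Finset.univ.filter fun a => (∀ d, (a d : ℕ) < M + 1) ∧ ¬(∀ d, (a d : ℕ) < M) with hB
  -- a cell determines its shell
  have hBdet : ∀ M N a, a ∈ B M → a ∈ B N → M = N := by
    intro M N a haM haN
    simp only [hB, Finset.mem_filter] at haM haN
    rcases Nat.lt_trichotomy M N with h | h | h
    · exact absurd (fun d => lt_of_lt_of_le (haM.2.1 d) h) haN.2.2
    · exact h
    · exact absurd (fun d => lt_of_lt_of_le (haN.2.1 d) h) haM.2.2
  have hcardB : ∀ M, M < k → (A M).card = (B M).card := by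
    intro M hM
    have hsub : (Finset.univ.filter fun a : Fin m → Fin k => ∀ d, (a d : ℕ) < M)
        ⊆ (Finset.univ.filter fun a : Fin m → Fin k => ∀ d, (a d : ℕ) < M + 1) := by
      intro a ha
      simp only [Finset.mem_filter] at ha ⊢
      exact ⟨ha.1, fun d => (ha.2 d).trans (Nat.lt_succ_self M)⟩
    have hBeq : B M = (Finset.univ.filter fun a : Fin m → Fin k => ∀ d, (a d : ℕ) < M + 1)
        \ (Finset.univ.filter fun a : Fin m → Fin k => ∀ d, (a d : ℕ) < M) := by
      ext a
      simp only [hB, Finset.mem_filter, Finset.mem_sdiff, Finset.mem_univ, true_and]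
    rw [hA]
    simp only [Nat.card_Ico]
    rw [hBeq, Finset.card_sdiff_of_subset hsub, card_filter_lt_pow m k M hM.le,
      card_filter_lt_pow m k (M + 1) hM]
  -- choose injections from index shells to cell shells
  have hg : ∀ M, ∃ g : ℕ → (Fin m → Fin k),
      M < k → (∀ i ∈ A M, g i ∈ B M) ∧ (∀ i ∈ A M, ∀ j ∈ A M, g i = g j → i = j) := by
    intro M
    by_cases hM : M < k
    · let e := Finset.equivOfCardEq (hcardB M hM)
      refine ⟨fun i => if h : i ∈ A M then (e ⟨i, h⟩ : {x // x ∈ B M}).1 else fun _ => ⟨0, hk⟩,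
        fun _ => ⟨?_, ?_⟩⟩
      · intro i hi; simp only [dif_pos hi]; exact (e ⟨i, hi⟩).2
      · intro i hi j hj hij
        simp only [dif_pos hi, dif_pos hj] at hij
        have := e.injective (Subtype.ext hij)
        exact congrArg Subtype.val this
    · exact ⟨fun _ _ => ⟨0, hk⟩, fun h => absurd h hM⟩
  choose g hg using hg
  set Mf : ℕ → ℕ := fun i => Nat.findGreatest (fun M => M ^ m ≤ i) k with hMf
  have hm0 : m ≠ 0 := by omega
  have hMlow : ∀ i, (Mf i) ^ m ≤ i := by
    intro i
    exact Nat.findGreatest_spec (P := fun M => M ^ m ≤ i) (Nat.zero_le k)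
      (by show 0 ^ m ≤ i; rw [Nat.zero_pow (by omega : 0 < m)]; exact Nat.zero_le i)
  have hMlt : ∀ i, i < k ^ m → Mf i < k := by
    intro i hi
    have h1 : Mf i ≤ k := Nat.findGreatest_le k
    rcases lt_or_eq_of_le h1 with h | h
    · exact h
    · exact absurd (h ▸ hMlow i) (not_le.2 hi)
  have hMhigh : ∀ i, i < k ^ m → i < (Mf i + 1) ^ m := by
    intro i hi
    have h2 : ¬ (Mf i + 1) ^ m ≤ i :=
      Nat.findGreatest_is_greatest (P := fun M => M ^ m ≤ i) (n := k)
        (Nat.lt_succ_self _) (hMlt i hi)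
    omega
  have hmem : ∀ i, i < k ^ m → i ∈ A (Mf i) := fun i hi =>
    Finset.mem_Ico.2 ⟨hMlow i, hMhigh i hi⟩
  refine ⟨fun i => if h : i < k ^ m then (fun d => (g (Mf i) i d : ℕ)) else fun _ => 0, ?_, ?_⟩
  · intro i hi d
    simp only [dif_pos hi]
    have hB1 := (hg (Mf i) (hMlt i hi)).1 i (hmem i hi)
    simp only [hB, Finset.mem_filter] at hB1
    constructor
    · exact (g (Mf i) i d).2
    · calc (g (Mf i) i d : ℕ) ^ m ≤ (Mf i) ^ m :=
          Nat.pow_le_pow_left (by have := hB1.2.1 d; omega) m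
        _ ≤ i := hMlow i
  · intro i j hi hj hij
    simp only [dif_pos hi, dif_pos hj] at hij
    have hgij : g (Mf i) i = g (Mf j) j := by
      funext d
      exact Fin.ext (congrFun hij d)
    have hBi := (hg (Mf i) (hMlt i hi)).1 i (hmem i hi)
    have hBj := (hg (Mf j) (hMlt j hj)).1 j (hmem j hj)
    have hMeq : Mf i = Mf j := hBdet _ _ _ hBi (hgij ▸ hBj)
    rw [← hMeq] at hBj hgij
    have hjmem : j ∈ A (Mf i) := hMeq ▸ hmem j hj
    exact (hg (Mf i) (hMlt i hi)).2 i (hmem i hi) j hjmem hgij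

/-- Any collection of `k^m` axis-parallel cubes in `ℝ^m` of descending side lengths
`s 0 ≥ s 1 ≥ ⋯ ≥ s (k^m - 1) ≥ 0` can be packed (translated, with pairwise disjoint
interiors) inside an axis-parallel cube of side length `∑_{j<k} s (j^m)`. -/
theorem square_packing (m k : ℕ) (hm : 2 ≤ m) (hk : 2 ≤ k)
    (s : ℕ → ℝ) (hnn : ∀ i, i < k ^ m → 0 ≤ s i)
    (hmono : ∀ i j, i ≤ j → j < k ^ m → s j ≤ s i) :
    ∃ x : ℕ → Fin m → ℝ,
      (∀ i, i < k ^ m →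
        cube (x i) (s i) ⊆ cube (0 : Fin m → ℝ) (∑ j ∈ Finset.range k, s (j ^ m))) ∧
      (∀ i j, i < k ^ m → j < k ^ m → i ≠ j →
        Disjoint (interior (cube (x i) (s i))) (interior (cube (x j) (s j)))) := by
  obtain ⟨c, hc, hinj⟩ := exists_assignment m k (by omega) (by omega)
  set x : ℕ → Fin m → ℝ := fun i d => ∑ j ∈ Finset.range (c i d), s (j ^ m) with hx
  have hpownn : ∀ j, j < k → 0 ≤ s (j ^ m) := by
    intro j hj
    exact hnn _ (Nat.pow_lt_pow_left hj (by omega))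
  -- key step inequality: x i d + s i ≤ sum over range (c i d + 1)
  have hstep : ∀ i, i < k ^ m → ∀ d,
      x i d + s i ≤ ∑ j ∈ Finset.range (c i d + 1), s (j ^ m) := by
    intro i hi d
    rw [Finset.sum_range_succ]
    have := hmono ((c i d) ^ m) i (hc i hi d).2 hi
    simp only [hx]
    linarith
  have hsumle : ∀ a b : ℕ, a ≤ b → b ≤ k →
      ∑ j ∈ Finset.range a, s (j ^ m) ≤ ∑ j ∈ Finset.range b, s (j ^ m) := by
    intro a b hab hbk
    apply Finset.sum_le_sum_of_subset_of_nonneg (Finset.range_subset_range.2 hab)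
    intro j hj _
    exact hpownn j (lt_of_lt_of_le (Finset.mem_range.1 hj) hbk)
  have hxnn : ∀ i, i < k ^ m → ∀ d, (0 : ℝ) ≤ x i d := by
    intro i hi d
    apply Finset.sum_nonneg
    intro j hj
    exact hpownn j (lt_of_lt_of_le (Finset.mem_range.1 hj) (hc i hi d).1.le)
  have hint : ∀ (x0 : Fin m → ℝ) (t : ℝ),
      interior (cube x0 t) = Set.pi Set.univ (fun d => Set.Ioo (x0 d) (x0 d + t)) := by
    intro x0 t
    have hcube : cube x0 t = Set.pi Set.univ (fun d => Set.Icc (x0 d) (x0 d + t)) := by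
      ext y
      simp only [cube, Set.mem_setOf_eq, Set.mem_pi, Set.mem_univ, Set.mem_Icc, forall_const]
    rw [hcube, interior_pi_set Set.finite_univ]
    simp [interior_Icc]
  have hdisj : ∀ i j, i < k ^ m → j < k ^ m → (∃ d, c i d < c j d) →
      Disjoint (interior (cube (x i) (s i))) (interior (cube (x j) (s j))) := by
    intro i j hi hj ⟨d, hd⟩
    rw [Set.disjoint_left]
    intro y hyi hyj
    rw [hint] at hyi hyj
    have h1 := hyi d (Set.mem_univ d)
    have h2 := hyj d (Set.mem_univ d)
    have hle : x i d + s i ≤ x j d := by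
      calc x i d + s i ≤ ∑ j' ∈ Finset.range (c i d + 1), s (j' ^ m) := hstep i hi d
        _ ≤ ∑ j' ∈ Finset.range (c j d), s (j' ^ m) := hsumle _ _ hd (hc j hj d).1.le
        _ = x j d := rfl
    exact absurd (h1.2.trans_le (hle.trans h2.1.le)) (lt_irrefl _)
  refine ⟨x, ?_, ?_⟩
  · intro i hi y hy d
    have hyd := hy d
    constructor
    · simpa using (hxnn i hi d).trans hyd.1
    · have : y d ≤ ∑ j ∈ Finset.range k, s (j ^ m) := by
        calc y d ≤ x i d + s i := hyd.2
          _ ≤ ∑ j' ∈ Finset.range (c i d + 1), s (j' ^ m) := hstep i hi d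
          _ ≤ ∑ j ∈ Finset.range k, s (j ^ m) := hsumle _ _ (hc i hi d).1 le_rfl
      simpa using this
  · intro i j hi hj hne
    have : c i ≠ c j := fun h => hne (hinj i j hi hj h)
    have : ∃ d, c i d ≠ c j d := by
      by_contra h
      push_neg at h
      exact this (funext h)
    obtain ⟨d, hd⟩ := this
    rcases lt_or_gt_of_ne hd with h | h
    · exact hdisj i j hi hj ⟨d, h⟩
    · exact (hdisj j i hj hi ⟨d, h⟩).symm
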